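/- For all 0 ≤ l ≤ m, ν₂(A_{l,m}) = ν₂((m+1−l)·(m+2−l)⋯(m+l)) + l, i.e., ν₂(A_{l,m}) = ν₂((m+l)!/(m−l)!) + l. -/

import Mathlib

open Finset

noncomputable def A (l m : ℕ) : ℚ :=
  ((l.factorial * m.factorial : ℕ) : ℚ) / 2 ^ (m - l) *
    ∑ k ∈ Finset.Icc l m,
      (2 : ℚ) ^ k * ((2 * m - 2 * k).choose (m - k)) * ((m + k).choose m) * (k.choose l)

namespace ValA

lemma vfact (n : ℕ) : (padicValNat 2 n.factorial : ℤ) = n - (Nat.digits 2 n).sum := by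
  have h := sub_one_mul_padicValNat_factorial (p := 2) n
  have h2 := Nat.digit_sum_le 2 n
  omega

lemma vchoose (a b : ℕ) : (padicValNat 2 ((a + b).choose a) : ℤ) =
    (Nat.digits 2 a).sum + (Nat.digits 2 b).sum - (Nat.digits 2 (a + b)).sum := by
  have key : (a + b).choose a * b.factorial * a.factorial = (a + b).factorial := by
    rw [add_comm a b]
    exact Nat.add_choose_mul_factorial_mul_factorial b a
  have h0 : (a + b).choose a ≠ 0 := (Nat.choose_pos (Nat.le_add_right a b)).ne'
  have hmul := congrArg (padicValNat 2) key
  rw [padicValNat.mul (by positivity) (Nat.factorial_ne_zero a),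
    padicValNat.mul h0 (Nat.factorial_ne_zero b)] at hmul
  have f1 := vfact a; have f2 := vfact b; have f3 := vfact (a + b)
  have := Nat.digit_sum_le 2 a; have := Nat.digit_sum_le 2 b
  have := Nat.digit_sum_le 2 (a + b)
  omega

lemma subadd (a b : ℕ) : (Nat.digits 2 (a + b)).sum ≤
    (Nat.digits 2 a).sum + (Nat.digits 2 b).sum := by
  have h := vchoose a b
  omega

lemma sdouble (n : ℕ) : (Nat.digits 2 (2 * n)).sum = (Nat.digits 2 n).sum := by
  rcases Nat.eq_zero_or_pos n with rfl | hn
  · simp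
  · rw [Nat.digits_def' (by norm_num) (by omega)]
    simp [Nat.mul_div_cancel_left _ (by norm_num : 0 < 2), Nat.mul_mod_right]

lemma sodd (n : ℕ) : (Nat.digits 2 (2 * n + 1)).sum = (Nat.digits 2 n).sum + 1 := by
  rw [Nat.digits_def' (by norm_num) (by omega)]
  have h1 : (2 * n + 1) % 2 = 1 := by omega
  have h2 : (2 * n + 1) / 2 = n := by omega
  rw [h1, h2]
  simp [add_comm]

lemma sone : (Nat.digits 2 1).sum = 1 := by norm_num

lemma ssucc (n : ℕ) : (Nat.digits 2 (n + 1)).sum ≤ (Nat.digits 2 n).sum + 1 := by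
  have := subadd n 1
  rw [sone] at this
  exact this

lemma slt (j : ℕ) (hj : 2 ≤ j) : (Nat.digits 2 j).sum < j := by
  obtain ⟨c, rfl | rfl⟩ := Nat.even_or_odd' j
  · have := Nat.digit_sum_le 2 c
    have := sdouble c
    omega
  · have := Nat.digit_sum_le 2 c
    have := sodd c
    omega

lemma key (a c j : ℕ) (hj : 1 ≤ j) (hpar : (a + (c + j)) % 2 = 0) :
    (Nat.digits 2 (c + j)).sum + (Nat.digits 2 (a + j)).sum + 1 ≤
    j + (Nat.digits 2 c).sum + (Nat.digits 2 j).sum + (Nat.digits 2 a).sum := by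
  rcases eq_or_lt_of_le hj with rfl | hj2
  · rw [sone]
    obtain ⟨d, rfl | rfl⟩ := Nat.even_or_odd' a
    · have hc : c % 2 = 1 := by omega
      obtain ⟨e, rfl⟩ : ∃ e, c = 2 * e + 1 := ⟨c / 2, by omega⟩
      have h1 : (Nat.digits 2 (2 * e + 1 + 1)).sum ≤ (Nat.digits 2 e).sum + 1 := by
        have he : 2 * e + 1 + 1 = 2 * (e + 1) := by ring
        rw [he, sdouble]
        exact ssucc e
      have h2 := sodd e
      have h3 := sodd d
      have h4 := sdouble d
      omega
    · have hc : c % 2 = 0 := by omega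
      obtain ⟨e, rfl⟩ : ∃ e, c = 2 * e := ⟨c / 2, by omega⟩
      have h1 : (Nat.digits 2 (2 * e + 1)).sum = (Nat.digits 2 e).sum + 1 := sodd e
      have h2 : (Nat.digits 2 (2 * d + 1 + 1)).sum ≤ (Nat.digits 2 d).sum + 1 := by
        have hd : 2 * d + 1 + 1 = 2 * (d + 1) := by ring
        rw [hd, sdouble]
        exact ssucc d
      have h3 := sodd d
      have h4 := sdouble e
      omega
  · have h1 := subadd c j
    have h2 := subadd a j
    have h3 := slt j hj2
    omega

/-- the k-th term of the sum, as a natural number -/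
def F (l m k : ℕ) : ℕ :=
  2 ^ k * ((2 * m - 2 * k).choose (m - k)) * ((m + k).choose m) * (k.choose l)

lemma Fne (l m k : ℕ) (hl : l ≤ k) (hk : k ≤ m) : F l m k ≠ 0 := by
  have h1 : 2 * m - 2 * k = (m - k) + (m - k) := by omega
  have h2 : (2 * m - 2 * k).choose (m - k) ≠ 0 := by
    rw [h1]; exact (Nat.choose_pos (Nat.le_add_right _ _)).ne'
  have h3 : (m + k).choose m ≠ 0 := (Nat.choose_pos (Nat.le_add_right m k)).ne'
  have h4 : k.choose l ≠ 0 := (Nat.choose_pos hl).ne'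
  have h5 : (2 : ℕ) ^ k ≠ 0 := by positivity
  simp only [F]
  positivity

lemma vterm (l m k : ℕ) (hl : l ≤ k) (hk : k ≤ m) :
    (padicValNat 2 (F l m k) : ℤ) =
      k + (Nat.digits 2 (m - k)).sum
        + ((Nat.digits 2 m).sum + (Nat.digits 2 k).sum - (Nat.digits 2 (m + k)).sum)
        + ((Nat.digits 2 l).sum + (Nat.digits 2 (k - l)).sum - (Nat.digits 2 k).sum) := by
  have h1 : 2 * m - 2 * k = (m - k) + (m - k) := by omega
  have h2 : (2 * m - 2 * k).choose (m - k) ≠ 0 := by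
    rw [h1]; exact (Nat.choose_pos (Nat.le_add_right _ _)).ne'
  have h3 : (m + k).choose m ≠ 0 := (Nat.choose_pos (Nat.le_add_right m k)).ne'
  have h4 : k.choose l ≠ 0 := (Nat.choose_pos hl).ne'
  have h5 : (2 : ℕ) ^ k ≠ 0 := by positivity
  have e1 : (padicValNat 2 ((2 * m - 2 * k).choose (m - k)) : ℤ) =
      (Nat.digits 2 (m - k)).sum := by
    rw [h1]
    have := vchoose (m - k) (m - k)
    have hd : (Nat.digits 2 ((m - k) + (m - k))).sum = (Nat.digits 2 (m - k)).sum := by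
      rw [← two_mul]; exact sdouble _
    omega
  have e2 : (padicValNat 2 ((m + k).choose m) : ℤ) =
      (Nat.digits 2 m).sum + (Nat.digits 2 k).sum - (Nat.digits 2 (m + k)).sum :=
    vchoose m k
  have e3 : (padicValNat 2 (k.choose l) : ℤ) =
      (Nat.digits 2 l).sum + (Nat.digits 2 (k - l)).sum - (Nat.digits 2 k).sum := by
    have hk2 : k = l + (k - l) := by omega
    have := vchoose l (k - l)
    rw [← hk2] at this
    exact this
  have e4 : padicValNat 2 ((2 : ℕ) ^ k) = k := padicValNat.prime_pow k
  have hmul : padicValNat 2 (F l m k) =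
      padicValNat 2 ((2 : ℕ) ^ k) + padicValNat 2 ((2 * m - 2 * k).choose (m - k))
        + padicValNat 2 ((m + k).choose m) + padicValNat 2 (k.choose l) := by
    rw [F, padicValNat.mul (by positivity) h4, padicValNat.mul (by positivity) h3,
      padicValNat.mul h5 h2]
  omega

end ValA

open ValA in
theorem val_A (l m : ℕ) (h : l ≤ m) :
    padicValRat 2 (A l m) =
      (padicValNat 2 ((m + l).factorial / (m - l).factorial) : ℤ) + l := by
  classical
  set S : ℕ := ∑ k ∈ Finset.Icc l m, F l m k with hSdef
  -- Step A : rewrite A as a single natural number over a power of 2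
  have hA : A l m = ((l.factorial * m.factorial * S : ℕ) : ℚ) / 2 ^ (m - l) := by
    rw [A, div_mul_eq_mul_div]
    congr 1
    rw [hSdef]
    push_cast [F]
    rw [Finset.mul_sum]
  -- Step C : split off the k = l term
  have hmem : l ∈ Finset.Icc l m := Finset.mem_Icc.mpr ⟨le_rfl, h⟩
  have hsplit : S = (∑ k ∈ Finset.Ioc l m, F l m k) + F l m l := by
    rw [hSdef, ← Finset.sum_erase_add _ _ hmem, Finset.Icc_erase_left]
  have hFl0 : F l m l ≠ 0 := Fne l m l le_rfl h
  set v : ℕ := padicValNat 2 (F l m l) with hvdef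
  -- Step D : every other term is divisible by 2^(v+1)
  have hterm : ∀ k ∈ Finset.Ioc l m, 2 ^ (v + 1) ∣ F l m k := by
    intro k hk
    rw [Finset.mem_Ioc] at hk
    obtain ⟨hlk, hkm⟩ := hk
    have hvk := vterm l m k (le_of_lt hlk) hkm
    have hvl := vterm l m l le_rfl h
    have hp : (Nat.digits 2 (l - l)).sum = 0 := by simp
    have hkey := key (m + l) (m - k) (k - l) (by omega) (by omega)
    have e1 : (m - k) + (k - l) = m - l := by omega
    have e2 : (m + l) + (k - l) = m + k := by omega
    rw [e1, e2] at hkey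
    have hle : v + 1 ≤ padicValNat 2 (F l m k) := by omega
    exact (pow_dvd_pow 2 hle).trans pow_padicValNat_dvd
  have hdvdR : 2 ^ (v + 1) ∣ ∑ k ∈ Finset.Ioc l m, F l m k :=
    Finset.dvd_sum hterm
  have hS0 : S ≠ 0 := by
    rw [hsplit]
    have := Nat.pos_of_ne_zero hFl0
    omega
  have hdvdS : 2 ^ v ∣ S := by
    rw [hsplit]
    exact dvd_add ((pow_dvd_pow 2 (Nat.le_succ v)).trans hdvdR) pow_padicValNat_dvd
  have hndvd : ¬ 2 ^ (v + 1) ∣ S := by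
    intro hcon
    rw [hsplit] at hcon
    exact pow_succ_padicValNat_not_dvd hFl0 ((Nat.dvd_add_right hdvdR).mp hcon)
  have hvS : padicValNat 2 S = v := by
    have h1 : v ≤ padicValNat 2 S := (padicValNat_dvd_iff_le hS0).mp hdvdS
    have h2 : ¬ (v + 1 ≤ padicValNat 2 S) := fun hc =>
      hndvd ((padicValNat_dvd_iff_le hS0).mpr hc)
    omega
  -- Step F : compute the valuation of A
  have hN0 : (l.factorial * m.factorial * S : ℕ) ≠ 0 := by
    have := l.factorial_pos; have := m.factorial_pos
    have := Nat.pos_of_ne_zero hS0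
    positivity
  have h2pow : ((2 : ℚ) ^ (m - l)) = (((2 ^ (m - l) : ℕ) : ℚ)) := by push_cast; ring
  rw [hA, h2pow, padicValRat.div (by exact_mod_cast hN0)
    (by positivity), padicValRat.of_nat, padicValRat.of_nat,
    padicValNat.prime_pow]
  have hmulN : padicValNat 2 (l.factorial * m.factorial * S) =
      padicValNat 2 l.factorial + padicValNat 2 m.factorial + v := by
    rw [padicValNat.mul (by positivity) hS0,
      padicValNat.mul l.factorial_ne_zero m.factorial_ne_zero, hvS]
  -- the right-hand side quotient
  have hdvdfact : (m - l).factorial ∣ (m + l).factorial :=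
    Nat.factorial_dvd_factorial (by omega)
  have hq0 : (m + l).factorial / (m - l).factorial ≠ 0 := by
    have := Nat.div_pos (Nat.factorial_le (show m - l ≤ m + l by omega))
      (m - l).factorial_pos
    omega
  have hq : padicValNat 2 ((m + l).factorial / (m - l).factorial) +
      padicValNat 2 (m - l).factorial = padicValNat 2 (m + l).factorial := by
    rw [← padicValNat.mul hq0 (m - l).factorial_ne_zero, Nat.div_mul_cancel hdvdfact]
  have hvl := vterm l m l le_rfl h
  have hll : l - l = 0 := by omega
  rw [hll] at hvl
  have hs0 : (Nat.digits 2 0).sum = 0 := by simp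
  have f1 := vfact l
  have f2 := vfact m
  have f3 := vfact (m + l)
  have f4 := vfact (m - l)
  have d1 := Nat.digit_sum_le 2 (m - l)
  have d2 := Nat.digit_sum_le 2 (m + l)
  rw [hmulN]
  omega
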